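/- Assume X > 0. For every x ≥ 0 and every h > 0, the derivative of the map h ↦ SIR1(x,h) equals (2·p_t·h/(p_M·(x² + h²)²))·(2·X·x − X² − Y²); consequently this derivative is nonnegative if and only if x ≥ Ψʰ, where Ψʰ = (X² + Y²)/(2·X). -/

import Mathlib

/-- SIR at the UAV located at (x,0,h). -/
noncomputable def SIR1 (pt pM X Y x h : ℝ) : ℝ :=
  pt * ((x - X) ^ 2 + Y ^ 2 + h ^ 2) / (pM * (x ^ 2 + h ^ 2))

/-- The threshold Ψʰ. -/
noncomputable def PsiH (X Y : ℝ) : ℝ := (X ^ 2 + Y ^ 2) / (2 * X)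

theorem stmt2 (D X Y pt pu pM : ℝ) (hD : 0 < D) (hX0 : 0 ≤ X) (hXD : X ≤ D)
    (hX : 0 < X) (hpt : 0 < pt) (hpu : 0 < pu) (hpM : 0 < pM) :
    ∀ x : ℝ, 0 ≤ x → ∀ h : ℝ, 0 < h →
      HasDerivAt (fun t => SIR1 pt pM X Y x t)
        (2 * pt * h / (pM * (x ^ 2 + h ^ 2) ^ 2) * (2 * X * x - X ^ 2 - Y ^ 2)) h ∧
      (0 ≤ 2 * pt * h / (pM * (x ^ 2 + h ^ 2) ^ 2) * (2 * X * x - X ^ 2 - Y ^ 2) ↔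
        x ≥ PsiH X Y) := by
  intro x hx h hh
  have hden : (0:ℝ) < x ^ 2 + h ^ 2 := by positivity
  have hg : pM * (x ^ 2 + h ^ 2) ≠ 0 := by positivity
  constructor
  · have hf : HasDerivAt (fun t : ℝ => pt * ((x - X) ^ 2 + Y ^ 2 + t ^ 2))
        (pt * (2 * h)) h := by
      simpa using (((hasDerivAt_pow 2 h).const_add ((x - X) ^ 2 + Y ^ 2)).const_mul pt)
    have hgd : HasDerivAt (fun t : ℝ => pM * (x ^ 2 + t ^ 2)) (pM * (2 * h)) h := by
      simpa using (((hasDerivAt_pow 2 h).const_add (x ^ 2)).const_mul pM)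
    have := hf.div hgd hg
    refine this.congr_deriv ?_
    rw [div_mul_eq_mul_div, div_eq_div_iff (by positivity) (by positivity)]
    ring
  · have hcoef : 0 < 2 * pt * h / (pM * (x ^ 2 + h ^ 2) ^ 2) := by positivity
    rw [ge_iff_le, PsiH, div_le_iff₀ (by linarith)]
    constructor
    · intro h0
      nlinarith [mul_pos hcoef hcoef]
    · intro h0
      have : 0 ≤ 2 * X * x - X ^ 2 - Y ^ 2 := by linarith
      positivity
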